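/- Let T1, T2 be q-commuting contractions on H and (F; Λ, P, U) a special Andô tuple for (T1, T2). Then P U Λ D_T T2 + P^⊥ Λ D_T = Λ D_T and U*(P^⊥ Λ D_T T1 + P U Λ D_T) = Λ D_T. -/

import Mathlib

set_option synthInstance.maxHeartbeats 1000000
set_option maxHeartbeats 2000000

open ContinuousLinearMap

/-- The `ℓ²`-sum of three copies of a complete space is complete. -/
instance piLpThreeCompleteSpace {H : Type*} [NormedAddCommGroup H] [CompleteSpace H] :
    CompleteSpace (PiLp 2 fun _ : Fin 3 => H) :=
  inferInstance

/-- For a special Andô tuple `(F; Λ, P, U)` of a `q`-commuting contractive pair `(T1, T2)`,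
writing `K = Λ D_T`, one has `P U Λ D_T T2 + P^⊥ Λ D_T = Λ D_T` and
`U*(P^⊥ Λ D_T T1 + P U Λ D_T) = Λ D_T`. -/
theorem special_Ando_tuple_identities_two
    {H : Type*} [NormedAddCommGroup H] [InnerProductSpace ℂ H] [CompleteSpace H]
    (q : ℂ) (hq : ‖q‖ = 1)
    (T1 T2 : H →L[ℂ] H) (hT1 : ‖T1‖ ≤ 1) (hT2 : ‖T2‖ ≤ 1)
    (hcomm : T1 * T2 = q • (T2 * T1))
    (DT DT1 DT2 : H →L[ℂ] H)
    (hDT : DT.IsPositive) (hDT1 : DT1.IsPositive) (hDT2 : DT2.IsPositive)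
    (hDTsq : DT * DT = 1 - adjoint (T1 * T2) * (T1 * T2))
    (hDT1sq : DT1 * DT1 = 1 - adjoint T1 * T1)
    (hDT2sq : DT2 * DT2 = 1 - adjoint T2 * T2)
    (P U : PiLp 2 (fun _ : Fin 3 => H) →L[ℂ] PiLp 2 (fun _ : Fin 3 => H))
    (hP : ∀ v : PiLp 2 (fun _ : Fin 3 => H),
      P v = (WithLp.equiv 2 (Fin 3 → H)).symm ![(WithLp.equiv 2 (Fin 3 → H)) v 0, 0, 0])
    (hUuni : adjoint U ∘L U = 1 ∧ U ∘L adjoint U = 1)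
    (hUact : ∀ h : H,
      U ((WithLp.equiv 2 (Fin 3 → H)).symm ![DT1 (T2 h), DT2 h, 0])
        = (WithLp.equiv 2 (Fin 3 → H)).symm ![DT1 h, DT2 (T1 h), 0])
    -- K = Λ ∘ D_T
    (K : H →L[ℂ] PiLp 2 (fun _ : Fin 3 => H))
    (hK : ∀ h : H, K h = (WithLp.equiv 2 (Fin 3 → H)).symm ![DT1 (T2 h), DT2 h, 0]) :
    (∀ h : H, P (U (K (T2 h))) + (K h - P (K h)) = K h) ∧
    (∀ h : H, adjoint U ((K (T1 h) - P (K (T1 h))) + P (U (K h))) = K h) := by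
  constructor
  · intro h
    rw [hK (T2 h), hUact (T2 h), hK h, hP, hP]
    ext i
    fin_cases i <;>
      simp [WithLp.equiv_symm_apply, WithLp.equiv_apply, PiLp.toLp_apply, Matrix.cons_val_zero,
        Matrix.cons_val_one, Matrix.head_cons]
  · intro h
    have key : (K (T1 h) - P (K (T1 h))) + P (U (K h)) = U (K h) := by
      rw [hK (T1 h), hK h, hUact h, hP, hP]
      ext i
      fin_cases i <;>
        simp [WithLp.equiv_symm_apply, WithLp.equiv_apply, PiLp.toLp_apply, Matrix.cons_val_zero,
          Matrix.cons_val_one, Matrix.head_cons]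
    rw [key]
    have := congrFun (congrArg DFunLike.coe hUuni.1) (K h)
    simpa using this
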